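/- For every subshift Σ, Keller's boundary capacity satisfies cap(Σ) ≥ h_𝒞(Σ). Moreover, there exists a subshift for which this inequality is strict: cap(Σ) > h_𝒞(Σ). -/

import Mathlib

open Filter Set MeasureTheory

namespace QFTPaper

variable {A : Type*} {B : Type*}

/-- The left shift on bi-infinite sequences over the alphabet `A`. -/
def shift (x : ℤ → A) : ℤ → A := fun n => x (n + 1)

/-- A subshift: a closed, shift-invariant subset of `A^ℤ`. -/
def IsSubshift [TopologicalSpace A] (X : Set (ℤ → A)) : Prop :=
  IsClosed X ∧ shift '' X = X

/-- The finite word `w` occurs in `x` at position `k`. -/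
def OccursAt (w : List A) (x : ℤ → A) (k : ℤ) : Prop :=
  ∀ i : Fin w.length, x (k + (i : ℕ)) = w.get i

/-- The language of `X`: words of length `n` occurring in elements of `X`
(at position `0`, which is no restriction by shift-invariance). -/
def Lang (X : Set (ℤ → A)) (n : ℕ) : Set (List A) :=
  { w | w.length = n ∧ ∃ x ∈ X, OccursAt w x 0 }

/-- Topological entropy of a subshift. -/
noncomputable def hTop (X : Set (ℤ → A)) : ℝ :=
  limsup (fun n : ℕ => Real.log (Nat.card ↥(Lang X n)) / (n : ℝ)) atTop

/-- Follower set of the finite word `w = A₋ₙ…A₀` (listed from `A₋ₙ` to `A₀`):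
the set of one-sided sequences `B₀B₁B₂…` with `B ∈ X` and `B₋ₙ…B₀ = A₋ₙ…A₀`,
realized by requiring `w` to occur in `B` at positions `0,…,n` and reading off
the tail of `B` starting at the position of the last letter of `w`.
For the empty word this gives `X₊` (by shift-invariance). -/
def fol (X : Set (ℤ → A)) (w : List A) : Set (ℕ → A) :=
  { y | ∃ B ∈ X, (∀ i : Fin w.length, B ((i : ℕ) : ℤ) = w.get i) ∧
        ∀ k : ℕ, y k = B ((w.length : ℤ) - 1 + (k : ℤ)) }

/-- `w = A₋ₙ…A₀` is a left constraint:
`∅ ≠ fol(A₋ₙ…A₀) ⊊ fol(A₋ₙ₊₁…A₀)`. -/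
def IsLeftConstraint (X : Set (ℤ → A)) (w : List A) : Prop :=
  w ≠ [] ∧ fol X w ≠ ∅ ∧ fol X w ⊂ fol X w.tail

/-- `𝒞(X, n)`: the set of left constraints of length `n`. -/
def LC (X : Set (ℤ → A)) (n : ℕ) : Set (List A) :=
  { w | w.length = n ∧ IsLeftConstraint X w }

/-- The left constraint entropy `h_𝒞(X) = limsup (1/n) log⁺ #𝒞(X,n)`. -/
noncomputable def hC (X : Set (ℤ → A)) : ℝ :=
  limsup (fun n : ℕ => max 0 (Real.log (Nat.card ↥(LC X n))) / (n : ℝ)) atTop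

/-- The time-reversed subshift `X̄`. -/
def rev (X : Set (ℤ → A)) : Set (ℤ → A) :=
  (fun x : ℤ → A => fun n : ℤ => x (-n)) '' X

/-- The symmetric constraint entropy `h_𝒮𝒞(X) = min (h_𝒞(X), h_𝒞(X̄))`. -/
noncomputable def hSC (X : Set (ℤ → A)) : ℝ := min (hC X) (hC (rev X))

/-- Subshift of quasi-finite type: `h_𝒮𝒞(X) < h_top(X)`. -/
def IsQFT [TopologicalSpace A] (X : Set (ℤ → A)) : Prop :=
  IsSubshift X ∧ hSC X < hTop X

/-- The word `B₋ₘ…B₀` read off from a one-sided past `b` (where `b j = B₋ⱼ`). -/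
def wordOf (b : ℕ → A) (m : ℕ) : List A :=
  (List.range (m + 1)).map fun j => b (m - j)

/-- An extendable left constraint: a left constraint `A₋ₙ…A₀` which admits a
one-sided past `B` extending it such that `B₋ₘ…B₀` is again a left constraint
for infinitely many `m`. -/
def IsExtendable (X : Set (ℤ → A)) (w : List A) : Prop :=
  IsLeftConstraint X w ∧
  ∃ b : ℕ → A, wordOf b (w.length - 1) = w ∧
    ∀ N : ℕ, ∃ m, N ≤ m ∧ IsLeftConstraint X (wordOf b m)

/-- `𝒞*(X, n)`: the set of extendable left constraints of length `n`. -/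
def ELC (X : Set (ℤ → A)) (n : ℕ) : Set (List A) :=
  { w | w.length = n ∧ IsExtendable X w }

/-- The extendable left constraint entropy `h*_𝒞(X)`. -/
noncomputable def hCstar (X : Set (ℤ → A)) : ℝ :=
  limsup (fun n : ℕ => Real.log (Nat.card ↥(ELC X n)) / (n : ℝ)) atTop

/-- `h*_𝒮𝒞(X) = min (h*_𝒞(X), h*_𝒞(X̄))`. -/
noncomputable def hSCstar (X : Set (ℤ → A)) : ℝ := min (hCstar X) (hCstar (rev X))

/-- Subshift of weak quasi-finite type: `h*_𝒮𝒞(X) < h_top(X)`. -/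
def IsWeakQFT [TopologicalSpace A] (X : Set (ℤ → A)) : Prop :=
  IsSubshift X ∧ hSCstar X < hTop X

/-- Subshift of finite type: defined by excluding a finite set of finite words. -/
def IsSFT (X : Set (ℤ → A)) : Prop :=
  ∃ F : Finset (List A), X = { x | ∀ w ∈ F, ∀ k : ℤ, ¬ OccursAt w x k }

/-- Sofic subshift: the image of an SFT under a continuous shift-commuting map. -/
def IsSofic [TopologicalSpace A] (X : Set (ℤ → A)) : Prop :=
  ∃ (B : Type) (_ : Fintype B) (Y : Set (ℤ → B)) (π : (ℤ → B) → (ℤ → A)),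
    IsSFT Y ∧
    (letI : TopologicalSpace B := ⊥
     Continuous π) ∧
    (∀ x : ℤ → B, π (shift x) = shift (π x)) ∧ π '' Y = X


/-- Topological conjugacy of subshifts: a homeomorphism commuting with the shifts. -/
def Conjugate [TopologicalSpace A] [TopologicalSpace B]
    (X : Set (ℤ → A)) (Y : Set (ℤ → B)) : Prop :=
  ∃ φ : X ≃ₜ Y, ∀ x x' : X, (x' : ℤ → A) = shift (x : ℤ → A) →
    (φ x' : ℤ → B) = shift (φ x : ℤ → B)

/-- The cylinder of a word of length `n` placed at positions `0,…,n-1`. -/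
def cylSet (n : ℕ) (w : Fin n → A) : Set (ℤ → A) :=
  { x | ∀ i : Fin n, x ((i : ℕ) : ℤ) = w i }

/-- Entropy of the partition of `A^ℤ` into cylinders of length `n`. -/
noncomputable def blockEntropy [Fintype A] [MeasurableSpace A]
    (μ : Measure (ℤ → A)) (n : ℕ) : ℝ :=
  ∑ w : Fin n → A, Real.negMulLog ((μ (cylSet n w)).toReal)

/-- Kolmogorov–Sinai entropy of a shift-invariant measure on `A^ℤ`,
computed with the natural (generating) partition into cylinders. -/
noncomputable def KSEntropy [Fintype A] [MeasurableSpace A]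
    (μ : Measure (ℤ → A)) : ℝ :=
  ⨅ n : ℕ, blockEntropy μ (n + 1) / (n + 1)

/-- A maximum measure: an ergodic shift-invariant Borel probability measure
carried by `X` whose Kolmogorov–Sinai entropy equals the topological entropy of `X`. -/
def IsMaxMeasure [Fintype A] [MeasurableSpace A]
    (X : Set (ℤ → A)) (μ : Measure (ℤ → A)) : Prop :=
  IsProbabilityMeasure μ ∧ μ Xᶜ = 0 ∧ Ergodic shift μ ∧ KSEntropy μ = hTop X

/-- The number of points of `X` fixed by the `n`-th power of the shift. -/
noncomputable def perCount (X : Set (ℤ → A)) (n : ℕ) : ℕ :=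
  Nat.card {x : ℤ → A | x ∈ X ∧ shift^[n] x = x}

/-- The one-sided subshift `X₊`. -/
def plusShift (X : Set (ℤ → A)) : Set (ℕ → A) :=
  { y | ∃ x ∈ X, ∀ k : ℕ, y k = x (k : ℤ) }

/-- The one-sided shift `σ₊`. -/
def shiftP (y : ℕ → A) : ℕ → A := fun n => y (n + 1)

/-- The one-sided cylinder `[w]₊` of a finite word in `X₊`. -/
def cylP (X : Set (ℤ → A)) (w : List A) : Set (ℕ → A) :=
  { y ∈ plusShift X | ∀ i : Fin w.length, y (i : ℕ) = w.get i }

/-- The set of words counted in Keller's boundary capacity for parameters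
`n`, `r`, `w`. -/
def capSet (X : Set (ℤ → A)) (n r : ℕ) (w : List A) : Set (List A) :=
  { a ∈ Lang X n |
      (cylP X a ∩ (shiftP^[r] '' cylP X w)).Nonempty ∧
      (cylP X a ∩ (plusShift X \ shiftP^[r] '' cylP X w)).Nonempty }

/-- Keller's boundary capacity. -/
noncomputable def cap (X : Set (ℤ → A)) : ℝ :=
  limsup (fun n : ℕ =>
    Real.log (sSup { c : ℝ | ∃ r : ℕ, 1 ≤ r ∧ ∃ w ∈ Lang X r,
      c = (Nat.card ↥(capSet X n r w) : ℝ) }) / (n : ℝ)) atTop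

section CapGeAux

variable {A : Type*}

/-- The set whose supremum appears in `cap`. -/
def capNums (X : Set (ℤ → A)) (n : ℕ) : Set ℝ :=
  { c : ℝ | ∃ r : ℕ, 1 ≤ r ∧ ∃ w ∈ Lang X r, c = (Nat.card ↥(capSet X n r w) : ℝ) }

lemma cap_eq (X : Set (ℤ → A)) :
    cap X = limsup (fun n : ℕ => Real.log (sSup (capNums X n)) / (n : ℝ)) atTop := rfl

lemma lang_finite [Finite A] (X : Set (ℤ → A)) (n : ℕ) : (Lang X n).Finite :=
  Set.Finite.subset (List.finite_length_eq _ _) fun _ hw => hw.1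

lemma capSet_subset_lang {X : Set (ℤ → A)} {n r : ℕ} {w : List A} :
    capSet X n r w ⊆ Lang X n := fun _ ha => ha.1

lemma card_len_le [Fintype A] {n : ℕ} {s : Set (List A)} (hs : ∀ l ∈ s, l.length = n) :
    Nat.card s ≤ Fintype.card A ^ n := by
  classical
  have hinj : Function.Injective
      (fun (l : s) (i : Fin n) => l.1.get (Fin.cast (hs l.1 l.2).symm i)) := by
    rintro ⟨l, hl⟩ ⟨l', hl'⟩ h
    apply Subtype.ext
    apply List.ext_get (by rw [hs l hl, hs l' hl'])
    intro i h1 h2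
    have := congrFun h ⟨i, by rwa [← hs l hl]⟩
    simpa [Fin.cast] using this
  calc Nat.card s ≤ Nat.card (Fin n → A) := Nat.card_le_card_of_injective _ hinj
    _ = Fintype.card A ^ n := by
        simp [Nat.card_fun, Nat.card_eq_fintype_card]

lemma card_lang_le [Fintype A] (X : Set (ℤ → A)) (n : ℕ) :
    Nat.card (Lang X n) ≤ Fintype.card A ^ n :=
  card_len_le fun _ hl => hl.1

lemma card_capSet_le [Fintype A] (X : Set (ℤ → A)) (n r : ℕ) (w : List A) :
    Nat.card (capSet X n r w) ≤ Fintype.card A ^ n :=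
  card_len_le fun _ hl => hl.1.1

lemma capNums_bddAbove [Fintype A] (X : Set (ℤ → A)) (n : ℕ) :
    BddAbove (capNums X n) := by
  refine ⟨(Fintype.card A ^ n : ℝ), ?_⟩
  rintro c ⟨r, hr, w, hw, rfl⟩
  exact_mod_cast card_capSet_le X n r w

lemma capNums_nonneg (X : Set (ℤ → A)) (n : ℕ) : ∀ c ∈ capNums X n, 0 ≤ c := by
  rintro c ⟨r, hr, w, hw, rfl⟩
  positivity

lemma sSup_capNums_nonneg (X : Set (ℤ → A)) (n : ℕ) : 0 ≤ sSup (capNums X n) :=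
  Real.sSup_nonneg (capNums_nonneg X n)

lemma log_sSup_capNums_nonneg [Fintype A] (X : Set (ℤ → A)) (n : ℕ) :
    0 ≤ Real.log (sSup (capNums X n)) := by
  rcases (capNums X n).eq_empty_or_nonempty with h | h
  · simp [h, Real.sSup_empty]
  · by_cases h1 : ∃ c ∈ capNums X n, 1 ≤ c
    · obtain ⟨c, hc, h1c⟩ := h1
      exact Real.log_nonneg (h1c.trans (le_csSup (capNums_bddAbove X n) hc))
    · push_neg at h1
      have hsub : capNums X n ⊆ {0} := by
        rintro c hc
        obtain ⟨r, hr, w, hw, rfl⟩ := hc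
        have hlt := h1 _ ⟨r, hr, w, hw, rfl⟩
        have hz : Nat.card (capSet X n r w) = 0 := by
          by_contra hne
          have h1' : (1 : ℝ) ≤ (Nat.card (capSet X n r w) : ℝ) := by
            exact_mod_cast Nat.one_le_iff_ne_zero.2 hne
          linarith
        simp [hz]
      have heq : capNums X n = {0} := (Set.Nonempty.subset_singleton_iff h).mp hsub
      simp [heq]

lemma log_sSup_capNums_le [Fintype A] (X : Set (ℤ → A)) (n : ℕ) :
    Real.log (sSup (capNums X n)) ≤ n * Real.log (Fintype.card A) := by
  have hA : 0 ≤ (n : ℝ) * Real.log (Fintype.card A) :=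
    mul_nonneg (by positivity) (Real.log_natCast_nonneg _)
  rcases (capNums X n).eq_empty_or_nonempty with h | h
  · simpa [h, Real.sSup_empty] using hA
  · have hle : sSup (capNums X n) ≤ ((Fintype.card A ^ n : ℕ) : ℝ) := by
      apply csSup_le h
      rintro c ⟨r, hr, w, hw, rfl⟩
      exact_mod_cast card_capSet_le X n r w
    rcases eq_or_lt_of_le (sSup_capNums_nonneg X n) with h0 | h0
    · rw [← h0]
      simpa using hA
    · calc Real.log (sSup (capNums X n)) ≤ Real.log ((Fintype.card A ^ n : ℕ) : ℝ) :=
            Real.log_le_log h0 hle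
        _ = n * Real.log (Fintype.card A) := by push_cast; rw [Real.log_pow]

end CapGeAux


section CapGeCore

variable {A : Type*}

lemma shift_mem {X : Set (ℤ → A)} (hinv : shift '' X = X) {x : ℤ → A} (hx : x ∈ X) :
    shift x ∈ X := by
  rw [← hinv]; exact Set.mem_image_of_mem shift hx

/-- Core geometric lemma: the tail of a left constraint is a boundary word. -/
lemma tail_mem_capSet {X : Set (ℤ → A)} (hinv : shift '' X = X) {a : A} {t : List A}
    (ht : t ≠ []) (h : IsLeftConstraint X (a :: t)) :
    t ∈ capSet X t.length 1 [a] := by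
  obtain ⟨-, hfol, hss⟩ := h
  obtain ⟨y₀, B, hBX, hBm, -⟩ := Set.nonempty_iff_ne_empty.2 hfol
  have hBa : B 0 = a := by
    have := hBm ⟨0, by simp⟩
    simpa using this
  have hBt : ∀ i : Fin t.length, B ((i : ℕ) + 1 : ℤ) = t.get i := by
    intro i
    have h2 := hBm ⟨(i : ℕ) + 1, by simpa using Nat.succ_lt_succ i.2⟩
    have harg : (((i : ℕ) + 1 : ℕ) : ℤ) = ((i : ℕ) + 1 : ℤ) := by push_cast; ring
    rw [harg] at h2
    simpa using h2
  have hmem1 : t ∈ Lang X t.length := by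
    refine ⟨rfl, shift B, shift_mem hinv hBX, fun i => ?_⟩
    have harg : shift B (0 + (i : ℕ)) = B ((i : ℕ) + 1 : ℤ) := by
      show B _ = B _
      congr 1
      ring
    rw [harg]; exact hBt i
  refine ⟨hmem1, ?_, ?_⟩
  · -- first intersection
    refine ⟨fun k : ℕ => B ((k : ℤ) + 1), ⟨⟨shift B, shift_mem hinv hBX, fun k => rfl⟩,
      fun i => hBt i⟩, ?_⟩
    refine ⟨fun k : ℕ => B (k : ℤ), ⟨⟨B, hBX, fun k => rfl⟩, ?_⟩, ?_⟩
    · intro i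
      have h0 : (i : ℕ) = 0 := by have h := i.isLt; simp only [List.length_cons, List.length_nil] at h; omega
      simp [h0, hBa]
    · rw [Function.iterate_one]
      funext k
      show B (((k + 1 : ℕ) : ℤ)) = B ((k : ℤ) + 1)
      norm_cast
  · -- second intersection
    obtain ⟨yst, hyt, hyn⟩ := Set.exists_of_ssubset hss
    have htl : (a :: t).tail = t := rfl
    rw [htl] at hyt
    obtain ⟨B', hB'X, hB'm, hyB'⟩ := hyt
    refine ⟨fun k : ℕ => B' (k : ℤ), ⟨⟨⟨B', hB'X, fun k => rfl⟩, fun i => hB'm i⟩,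
      ⟨B', hB'X, fun k => rfl⟩, ?_⟩⟩
    -- not in the shifted cylinder
    rintro ⟨z', ⟨⟨C, hCX, hzC⟩, hz0⟩, hsh⟩
    · rw [Function.iterate_one] at hsh
      have hC0 : C 0 = a := by
        have h1 : z' 0 = a := by
          have := hz0 ⟨0, by simp⟩
          simpa using this
        rw [← h1, hzC 0]
        norm_cast
      have hCk : ∀ k : ℕ, C ((k : ℤ) + 1) = B' (k : ℤ) := by
        intro k
        have h1 : z' (k + 1) = B' (k : ℤ) := congrFun hsh k
        have h2 := hzC (k + 1)
        rw [h2] at h1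
        rw [← h1]; norm_cast
      apply hyn
      refine ⟨C, hCX, ?_, ?_⟩
      · intro i
        rcases i with ⟨iv, hiv⟩
        match iv, hiv with
        | 0, hiv => simpa using hC0
        | (j+1), hiv =>
          have hj : j < t.length := by simpa using hiv
          have harg : (((j + 1 : ℕ)) : ℤ) = (j : ℤ) + 1 := by push_cast; ring
          show C (((j + 1 : ℕ)) : ℤ) = (a :: t).get ⟨j + 1, hiv⟩
          rw [harg, hCk j]
          have := hB'm ⟨j, hj⟩
          simpa using this
      · intro k
        have hlen : 1 ≤ t.length := List.length_pos_iff.2 ht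
        have hcast : ((t.length - 1 + k : ℕ) : ℤ) = (t.length : ℤ) - 1 + k := by omega
        have h1 : yst k = B' ((t.length - 1 + k : ℕ) : ℤ) := by rw [hcast]; exact hyB' k
        have h2 := hCk (t.length - 1 + k)
        rw [← h2] at h1
        rw [h1]
        congr 1
        simp only [List.length_cons]
        push_cast
        omega

/-- If a capSet with single-letter word is nonempty then the letter is in the language. -/
lemma letter_mem_lang {X : Set (ℤ → A)} {n : ℕ} {c : A}
    (h : (capSet X n 1 [c]).Nonempty) : [c] ∈ Lang X 1 := by
  obtain ⟨a, -, ⟨y, -, z, ⟨⟨x, hxX, hzx⟩, hz0⟩, -⟩, -⟩ := h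
  refine ⟨rfl, x, hxX, fun i => ?_⟩
  have h0 : (i : ℕ) = 0 := by have h := i.isLt; simp only [List.length_cons, List.length_nil] at h; omega
  have h1 : z 0 = c := by
    have := hz0 ⟨0, by simp⟩
    simpa using this
  have hx0 : x (0 : ℤ) = c := by
    have h2 := hzx 0
    rw [h1] at h2
    exact_mod_cast h2.symm
  simpa [h0] using hx0

end CapGeCore


section CapGeMain

variable {A : Type*}

lemma card_LC_le_real [Fintype A] {X : Set (ℤ → A)} (hinv : shift '' X = X) {n : ℕ}
    (hn : 2 ≤ n) (hne : (LC X n).Nonempty) :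
    1 ≤ sSup (capNums X (n - 1)) ∧
    (Nat.card (LC X n) : ℝ) ≤ (Fintype.card A : ℝ) * sSup (capNums X (n - 1)) := by
  classical
  obtain ⟨w₀, hw₀⟩ := hne
  haveI : Inhabited A := ⟨w₀.head hw₀.2.1⟩
  -- every constraint decomposes as head :: tail with tail in a capSet
  have hdec : ∀ w ∈ LC X n, ∃ (c : A) (t : List A), w = c :: t ∧ t.length = n - 1 ∧
      t ∈ capSet X (n - 1) 1 [c] := by
    intro w hw
    obtain ⟨c, t, rfl⟩ := List.exists_cons_of_ne_nil hw.2.1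
    have hlen : t.length = n - 1 := by
      have := hw.1
      simp only [List.length_cons] at this
      omega
    have htne : t ≠ [] := by
      intro h
      rw [h] at hlen
      simp at hlen
      omega
    have := tail_mem_capSet hinv htne hw.2
    rw [hlen] at this
    exact ⟨c, t, rfl, hlen, this⟩
  -- the sup is at least 1
  have hM0 : 0 ≤ sSup (capNums X (n - 1)) := sSup_capNums_nonneg X (n - 1)
  have hbdd := capNums_bddAbove X (n - 1)
  have hcfin : ∀ c : A, (capSet X (n - 1) 1 [c]).Finite :=
    fun c => (lang_finite X (n - 1)).subset capSet_subset_lang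
  have hcle : ∀ c : A, (Nat.card (capSet X (n - 1) 1 [c]) : ℝ) ≤ sSup (capNums X (n - 1)) := by
    intro c
    rcases (capSet X (n - 1) 1 [c]).eq_empty_or_nonempty with h | h
    · simp [h, hM0]
    · have hc1 : [c] ∈ Lang X 1 := letter_mem_lang h
      exact le_csSup hbdd ⟨1, le_refl 1, [c], hc1, rfl⟩
  constructor
  · obtain ⟨c, t, hwt, hlen, hmem⟩ := hdec w₀ hw₀
    haveI : Finite (capSet X (n - 1) 1 [c]) := (hcfin c).to_subtype
    have h1 : 1 ≤ Nat.card (capSet X (n - 1) 1 [c]) :=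
      Nat.one_le_iff_ne_zero.2 (Nat.card_ne_zero.2 ⟨⟨t, hmem⟩, inferInstance⟩)
    calc (1 : ℝ) ≤ (Nat.card (capSet X (n - 1) 1 [c]) : ℝ) := by exact_mod_cast h1
      _ ≤ _ := hcle c
  · -- fiberwise count
    have hLCfin : (LC X n).Finite :=
      Set.Finite.subset (List.finite_length_eq _ _) fun _ hw => hw.1
    set s : Finset (List A) := hLCfin.toFinset with hs
    have hcard : Nat.card (LC X n) = s.card := by
      rw [Nat.card_coe_set_eq, Set.ncard_eq_toFinset_card _ hLCfin]
    rw [hcard]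
    have hfib : s.card = ∑ c ∈ (Finset.univ : Finset A),
        (s.filter fun w => w.headI = c).card :=
      Finset.card_eq_sum_card_fiberwise fun w _ => Finset.mem_univ _
    have hfible : ∀ c : A, ((s.filter fun w => w.headI = c).card : ℝ) ≤
        sSup (capNums X (n - 1)) := by
      intro c
      refine le_trans ?_ (hcle c)
      have hinj : (s.filter fun w => w.headI = c).card ≤ Nat.card (capSet X (n - 1) 1 [c]) := by
        rw [Nat.card_coe_set_eq, Set.ncard_eq_toFinset_card _ (hcfin c)]
        apply Finset.card_le_card_of_injOn List.tail
        · intro w hw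
          rw [Finset.mem_coe, Finset.mem_filter] at hw
          obtain ⟨hws, hwh⟩ := hw
          rw [hs, Set.Finite.mem_toFinset] at hws
          obtain ⟨c', t, rfl, hlen, hmem⟩ := hdec w hws
          simp only [List.headI_cons] at hwh
          rw [Finset.mem_coe, Set.Finite.mem_toFinset]
          simpa [← hwh] using hmem
        · intro w hw w' hw' htails
          simp only [Finset.coe_filter, Set.mem_setOf_eq] at hw hw'
          obtain ⟨hws, hwh⟩ := hw
          obtain ⟨hws', hwh'⟩ := hw'
          rw [hs, Set.Finite.mem_toFinset] at hws hws'
          obtain ⟨c1, t1, rfl, -, -⟩ := hdec w hws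
          obtain ⟨c2, t2, rfl, -, -⟩ := hdec w' hws'
          simp only [List.headI_cons] at hwh hwh'
          simp only [List.tail_cons] at htails
          rw [hwh, hwh', htails]
      exact_mod_cast hinj
    calc (s.card : ℝ) = ∑ c ∈ (Finset.univ : Finset A),
          ((s.filter fun w => w.headI = c).card : ℝ) := by exact_mod_cast hfib
      _ ≤ ∑ _c ∈ (Finset.univ : Finset A), sSup (capNums X (n - 1)) :=
          Finset.sum_le_sum fun c _ => hfible c
      _ = (Fintype.card A : ℝ) * sSup (capNums X (n - 1)) := by
          rw [Finset.sum_const, Finset.card_univ, nsmul_eq_mul]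

lemma main_bound [Fintype A] {X : Set (ℤ → A)} (hinv : shift '' X = X) {n : ℕ} (hn : 2 ≤ n) :
    max 0 (Real.log (Nat.card (LC X n))) ≤
      Real.log (Fintype.card A) + Real.log (sSup (capNums X (n - 1))) := by
  have hA : 0 ≤ Real.log (Fintype.card A) := Real.log_natCast_nonneg _
  have hF : 0 ≤ Real.log (sSup (capNums X (n - 1))) := log_sSup_capNums_nonneg X (n - 1)
  rcases (LC X n).eq_empty_or_nonempty with h | h
  · have : Nat.card (LC X n) = 0 := by simp [h]
    rw [this]
    simp only [Nat.cast_zero, Real.log_zero, max_self]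
    linarith
  · obtain ⟨hM1, hle⟩ := card_LC_le_real hinv hn h
    have hLCfin : (LC X n).Finite :=
      Set.Finite.subset (List.finite_length_eq _ _) fun _ hw => hw.1
    haveI : Finite (LC X n) := hLCfin.to_subtype
    have hpos : 0 < Nat.card (LC X n) :=
      Nat.pos_of_ne_zero (Nat.card_ne_zero.2 ⟨h.to_subtype, inferInstance⟩)
    have hcardA : (0 : ℝ) < Fintype.card A := by
      have : Nonempty A := ⟨(Classical.choice h.to_subtype).1.head
        (Classical.choice h.to_subtype).2.2.1⟩
      exact_mod_cast Fintype.card_pos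
    have hlog : Real.log (Nat.card (LC X n)) ≤
        Real.log ((Fintype.card A : ℝ) * sSup (capNums X (n - 1))) :=
      Real.log_le_log (by exact_mod_cast hpos) hle
    rw [Real.log_mul (ne_of_gt hcardA) (by linarith)] at hlog
    exact max_le (by linarith) hlog

lemma real_le_of_forall_pos (a b : ℝ) (h : ∀ ε : ℝ, 0 < ε → a ≤ b + ε) : a ≤ b := by
  by_contra hlt
  push_neg at hlt
  have := h ((a - b) / 2) (by linarith)
  linarith

/-- The main inequality, for an arbitrary shift-invariant set. -/
theorem hC_le_cap [Fintype A] (X : Set (ℤ → A)) (hinv : shift '' X = X) : hC X ≤ cap X := by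
  classical
  rcases isEmpty_or_nonempty A with hA | hA
  · -- degenerate case: no symbols
    have hLC : ∀ n, LC X n = ∅ := by
      intro n
      ext w
      simp only [Set.mem_empty_iff_false, iff_false]
      intro hw
      obtain ⟨c, t, rfl⟩ := List.exists_cons_of_ne_nil hw.2.1
      exact hA.false c
    have hcapN : ∀ n, capNums X n = ∅ := by
      intro n
      ext c
      simp only [Set.mem_empty_iff_false, iff_false]
      rintro ⟨r, hr, w, hw, rfl⟩
      obtain ⟨x, hx, -⟩ := hw.2
      exact hA.false (x 0)
    have h1 : hC X = 0 := by
      have : (fun n : ℕ => max 0 (Real.log (Nat.card (LC X n))) / (n : ℝ)) =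
          fun _ : ℕ => (0 : ℝ) := by
        funext n
        simp [hLC n]
      rw [hC, this, limsup_const]
    have h2 : cap X = 0 := by
      rw [cap_eq]
      have : (fun n : ℕ => Real.log (sSup (capNums X n)) / (n : ℝ)) =
          fun _ : ℕ => (0 : ℝ) := by
        funext n
        simp [hcapN n, Real.sSup_empty]
      rw [this, limsup_const]
    rw [h1, h2]
  · -- main case
    set u : ℕ → ℝ := fun n => max 0 (Real.log (Nat.card (LC X n))) / (n : ℝ) with hu
    set v : ℕ → ℝ := fun n => Real.log (sSup (capNums X n)) / (n : ℝ) with hv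
    have hurw : hC X = limsup u atTop := rfl
    have hvrw : cap X = limsup v atTop := rfl
    have hu0 : ∀ n, 0 ≤ u n := fun n => div_nonneg (le_max_left _ _) (Nat.cast_nonneg n)
    have hv0 : ∀ n, 0 ≤ v n := fun n =>
      div_nonneg (log_sSup_capNums_nonneg X n) (Nat.cast_nonneg n)
    have hvB : ∀ n, v n ≤ Real.log (Fintype.card A) := by
      intro n
      rcases Nat.eq_zero_or_pos n with h0 | h0
      · simp [hv, h0]
        exact Real.log_natCast_nonneg _
      · rw [hv]
        rw [div_le_iff₀ (by exact_mod_cast h0)]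
        calc Real.log (sSup (capNums X n)) ≤ n * Real.log (Fintype.card A) :=
              log_sSup_capNums_le X n
          _ = Real.log (Fintype.card A) * n := by ring
    have hbv : IsBoundedUnder (· ≤ ·) atTop v :=
      Filter.isBoundedUnder_of ⟨Real.log (Fintype.card A), hvB⟩
    rw [hurw, hvrw]
    apply real_le_of_forall_pos
    intro ε hε
    set L := limsup v atTop with hL
    have hL0 : 0 ≤ L :=
      le_limsup_of_frequently_le (Filter.Frequently.of_forall hv0) hbv
    -- eventually v m < L + ε / 2
    obtain ⟨N1, hN1⟩ := (Filter.eventually_atTop).1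
      (eventually_lt_of_limsup_lt (show L < L + ε / 2 by linarith) hbv)
    -- eventually log card A / n small
    set N2 : ℕ := ⌈Real.log (Fintype.card A) / (ε / 2)⌉₊ + 1 with hN2def
    have hN2 : ∀ n : ℕ, N2 ≤ n → Real.log (Fintype.card A) / n ≤ ε / 2 := by
      intro n hn
      have hn0 : (0 : ℝ) < n := by
        have : 0 < n := lt_of_lt_of_le (Nat.succ_pos _) hn
        exact_mod_cast this
      rw [div_le_iff₀ hn0]
      have h1 : Real.log (Fintype.card A) / (ε / 2) ≤
          (⌈Real.log (Fintype.card A) / (ε / 2)⌉₊ : ℝ) := Nat.le_ceil _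
      have h2 : Real.log (Fintype.card A) ≤
          (⌈Real.log (Fintype.card A) / (ε / 2)⌉₊ : ℝ) * (ε / 2) :=
        (div_le_iff₀ (half_pos hε)).1 h1
      calc Real.log (Fintype.card A) ≤
            (⌈Real.log (Fintype.card A) / (ε / 2)⌉₊ : ℝ) * (ε / 2) := h2
        _ ≤ (n : ℝ) * (ε / 2) := by
            apply mul_le_mul_of_nonneg_right _ (le_of_lt (half_pos hε))
            exact_mod_cast (by omega : ⌈Real.log (Fintype.card A) / (ε / 2)⌉₊ ≤ n)
        _ = ε / 2 * n := by ring
    have hev : ∀ᶠ n in atTop, u n ≤ L + ε := by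
      rw [Filter.eventually_atTop]
      refine ⟨max (max 2 (N1 + 1)) N2, fun n hn => ?_⟩
      have hn2 : 2 ≤ n := le_trans (le_trans (le_max_left 2 (N1 + 1)) (le_max_left _ N2)) hn
      have hnN1' : N1 + 1 ≤ n :=
        le_trans (le_trans (le_max_right 2 (N1 + 1)) (le_max_left _ N2)) hn
      have hnN1 : N1 ≤ n - 1 := by omega
      have hnN2 : N2 ≤ n := le_trans (le_max_right _ N2) hn
      have hb := main_bound (X := X) hinv hn2
      have hnR : (0 : ℝ) < (n : ℝ) := by exact_mod_cast (by omega : 0 < n)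
      have hn1R : (0 : ℝ) < ((n - 1 : ℕ) : ℝ) := by exact_mod_cast (by omega : 0 < n - 1)
      have step1 : u n ≤ (Real.log (Fintype.card A) +
          Real.log (sSup (capNums X (n - 1)))) / n := by
        rw [hu]
        exact (div_le_div_iff_of_pos_right hnR).2 hb
      have step3 : Real.log (sSup (capNums X (n - 1))) / (n : ℝ) ≤ v (n - 1) := by
        rw [hv]
        exact div_le_div_of_nonneg_left (log_sSup_capNums_nonneg X (n - 1)) hn1R
          (by exact_mod_cast (by omega : n - 1 ≤ n))
      have step4 : v (n - 1) < L + ε / 2 := hN1 _ hnN1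
      have step5 : Real.log (Fintype.card A) / (n : ℝ) ≤ ε / 2 := hN2 n hnN2
      have := add_div (Real.log (Fintype.card A))
        (Real.log (sSup (capNums X (n - 1)))) (n : ℝ)
      calc u n ≤ (Real.log (Fintype.card A) + Real.log (sSup (capNums X (n - 1)))) / n :=
            step1
        _ = Real.log (Fintype.card A) / n + Real.log (sSup (capNums X (n - 1))) / n := this
        _ ≤ ε / 2 + v (n - 1) := add_le_add step5 step3
        _ ≤ L + ε := by linarith
    exact limsup_le_of_le (Filter.isCoboundedUnder_le_of_le atTop hu0) hev

end CapGeMain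


section StrictExample

/-- The set of "free" positions after the symbol `2`. -/
def inS (d : ℕ) : Prop :=
  1 ≤ Nat.log 4 d ∧ d < 4 ^ Nat.log 4 d + Nat.log 4 d

instance : DecidablePred inS := fun _ => instDecidableAnd

lemma log4_window {n j : ℕ} (hn : 1 ≤ n) (hj : j ≤ n) : Nat.log 4 (4 ^ n + j) = n := by
  have h1 : n < 4 ^ n := Nat.lt_pow_self (by norm_num)
  apply Nat.log_eq_of_pow_le_of_lt_pow (Nat.le_add_right _ _)
  have : 4 ^ (n + 1) = 4 * 4 ^ n := by ring
  omega

lemma inS_window {n j : ℕ} (hn : 1 ≤ n) (hj : j < n) : inS (4 ^ n + j) := by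
  constructor
  · rw [log4_window hn (le_of_lt hj)]; exact hn
  · rw [log4_window hn (le_of_lt hj)]; omega

lemma not_inS_end {n : ℕ} (hn : 1 ≤ n) : ¬ inS (4 ^ n + n) := by
  rintro ⟨h1, h2⟩
  rw [log4_window hn le_rfl] at h2
  omega

lemma inS_mem_Ico {d : ℕ} (h : inS d) :
    d ∈ Finset.Ico (4 ^ Nat.log 4 d) (4 ^ Nat.log 4 d + Nat.log 4 d) := by
  obtain ⟨h1, h2⟩ := h
  have hd0 : d ≠ 0 := by
    intro h0
    rw [h0] at h1
    simp [Nat.log_zero_right] at h1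
  exact Finset.mem_Ico.2 ⟨Nat.pow_log_le_self 4 hd0, h2⟩

lemma arith_pow : ∀ K, 4 ≤ K → 2 * ((K + 1) * K) ≤ 4 ^ K := by
  intro K hK
  induction K, hK using Nat.le_induction with
  | base => norm_num
  | succ n hn ih =>
    have h1 : 2 * ((n + 2) * (n + 1)) ≤ 4 * (2 * ((n + 1) * n)) := by nlinarith
    calc 2 * ((n + 1 + 1) * (n + 1)) ≤ 4 * (2 * ((n + 1) * n)) := h1
      _ ≤ 4 * 4 ^ n := by omega
      _ = 4 ^ (n + 1) := by ring

lemma filter_inS_card {m : ℕ} (hm : 256 ≤ m) :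
    2 * ((Finset.range m).filter inS).card ≤ m := by
  set K := Nat.log 4 m with hK
  have hsub : (Finset.range m).filter inS ⊆
      (Finset.range (K + 1)).biUnion fun k => Finset.Ico (4 ^ k) (4 ^ k + k) := by
    intro d hd
    rw [Finset.mem_filter, Finset.mem_range] at hd
    obtain ⟨hdm, hdS⟩ := hd
    rw [Finset.mem_biUnion]
    refine ⟨Nat.log 4 d, ?_, inS_mem_Ico hdS⟩
    rw [Finset.mem_range]
    have := Nat.log_mono_right (b := 4) (le_of_lt hdm)
    omega
  have hcard : ((Finset.range m).filter inS).card ≤ (K + 1) * K := by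
    calc ((Finset.range m).filter inS).card
        ≤ ((Finset.range (K + 1)).biUnion fun k => Finset.Ico (4 ^ k) (4 ^ k + k)).card :=
          Finset.card_le_card hsub
      _ ≤ (Finset.range (K + 1)).card * K := by
          apply Finset.card_biUnion_le_card_mul
          intro k hk
          rw [Finset.mem_range] at hk
          rw [Nat.card_Ico]
          omega
      _ = (K + 1) * K := by rw [Finset.card_range]
  have hK4 : 4 ≤ K := by
    rw [hK]
    have : (4 : ℕ) ^ 4 ≤ m := by norm_num; omega
    exact (Nat.le_log_iff_pow_le (by norm_num) (by omega)).2 this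
  have h4K : 4 ^ K ≤ m := Nat.pow_log_le_self 4 (by omega)
  have := arith_pow K hK4
  omega

/-- The example subshift on three symbols: after a `2`, the sequence is `0`
except on the sparse set `S` of offsets, where it may be `0` or `1`. -/
def X3 : Set (ℤ → Fin 3) :=
  { x | ∀ (i : ℤ) (d : ℕ), 1 ≤ d → x i = 2 →
      (inS d → x (i + d) ≠ 2) ∧ (¬ inS d → x (i + d) = 0) }

lemma X3_translate {x : ℤ → Fin 3} (hx : x ∈ X3) (t : ℤ) : (fun i => x (i + t)) ∈ X3 := by
  intro i d hd h2
  have := hx (i + t) d hd h2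
  have harg : i + t + d = i + d + t := by ring
  rw [harg] at this
  exact this

lemma shift_X3 : shift '' X3 = X3 := by
  apply Set.eq_of_subset_of_subset
  · rintro _ ⟨x, hx, rfl⟩
    exact X3_translate hx 1
  · intro x hx
    refine ⟨fun i => x (i + (-1)), X3_translate hx (-1), ?_⟩
    funext n
    show x (n + 1 + (-1)) = x n
    congr 1
    ring

lemma no2_mem {x : ℤ → Fin 3} (h : ∀ i, x i ≠ 2) : x ∈ X3 :=
  fun i _ _ h2 => absurd h2 (h i)

end StrictExample


section Classification

lemma fol_tail_subset {w : List (Fin 3)} (hlen : 2 ≤ w.length)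
    (h0 : ∀ h : 0 < w.length, w.get ⟨0, h⟩ ≠ 2) :
    fol X3 w.tail ⊆ fol X3 w := by
  intro y hy
  obtain ⟨B', hB'X, hB'm, hyB'⟩ := hy
  have hpos : 0 < w.length := by omega
  set Bn : ℤ → Fin 3 :=
    fun i => if 1 ≤ i then B' (i - 1) else if i = 0 then w.get ⟨0, hpos⟩ else 0 with hBn
  have hval1 : ∀ i : ℤ, 1 ≤ i → Bn i = B' (i - 1) := by
    intro i hi
    rw [hBn]
    simp only
    rw [if_pos hi]
  have hBnX : Bn ∈ X3 := by
    intro i d hd h2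
    rcases lt_trichotomy i 0 with hi | hi | hi
    · exfalso
      have hz : Bn i = 0 := by
        rw [hBn]
        simp only
        rw [if_neg (by omega), if_neg (by omega)]
      rw [hz] at h2
      exact absurd h2 (by decide)
    · exfalso
      have hz : Bn i = w.get ⟨0, hpos⟩ := by
        rw [hBn]
        simp only
        rw [if_neg (by omega), if_pos hi]
      rw [hz] at h2
      exact h0 hpos h2
    · have hB2 : B' (i - 1) = 2 := by
        rw [← hval1 i (by omega)]
        exact h2
      have hc := hB'X (i - 1) d hd hB2
      have harg : i - 1 + d = i + d - 1 := by ring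
      rw [harg] at hc
      rw [hval1 (i + d) (by omega)]
      exact hc
  refine ⟨Bn, hBnX, ?_, ?_⟩
  · rintro ⟨iv, hiv⟩
    match iv, hiv with
    | 0, hiv =>
      show Bn (((0 : ℕ) : ℤ)) = w.get ⟨0, hiv⟩
      have hz : Bn 0 = w.get ⟨0, hpos⟩ := by
        rw [hBn]
        simp
      simpa using hz
    | (j + 1), hiv =>
      have hj : j < w.tail.length := by
        rw [List.length_tail]
        omega
      show Bn (((j + 1 : ℕ) : ℤ)) = w.get ⟨j + 1, hiv⟩
      have harg : (((j + 1 : ℕ)) : ℤ) = (j : ℤ) + 1 := by push_cast; ring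
      rw [harg]
      have hval : Bn ((j : ℤ) + 1) = B' (j : ℤ) := by
        rw [hval1 _ (by omega)]
        congr 1
        ring
      rw [hval]
      have hm := hB'm ⟨j, hj⟩
      have := List.get_tail w j hj (by omega)
      rw [this] at hm
      exact hm
  · intro k
    have h1 := hyB' k
    have hval : Bn ((w.length : ℤ) - 1 + k) = B' ((w.length : ℤ) - 1 + k - 1) := by
      rw [hval1 _ (by omega)]
    rw [hval, h1]
    congr 1
    rw [List.length_tail]
    push_cast [Nat.cast_sub (by omega : 1 ≤ w.length)]
    ring

lemma lc_struct {m : ℕ} (hm : 2 ≤ m) {w : List (Fin 3)} (hw : w ∈ LC X3 m) :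
    ∀ h0 : 0 < w.length, w.get ⟨0, h0⟩ = 2 ∧
      ∀ (d : ℕ) (hd : d < w.length), 1 ≤ d →
        (inS d → w.get ⟨d, hd⟩ ≠ 2) ∧ (¬ inS d → w.get ⟨d, hd⟩ = 0) := by
  intro h0
  obtain ⟨hlen, -, hfol, hss⟩ := hw
  have hlen2 : 2 ≤ w.length := by omega
  -- the first letter must be 2
  have hw0 : w.get ⟨0, h0⟩ = 2 := by
    by_contra hne
    have hsub := fol_tail_subset hlen2 (fun h => by
      have : (⟨0, h⟩ : Fin w.length) = ⟨0, h0⟩ := rfl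
      rw [this]
      exact hne)
    rw [Set.ssubset_def] at hss
    exact hss.2 hsub
  refine ⟨hw0, ?_⟩
  intro d hd hd1
  obtain ⟨y₀, B, hBX, hBm, -⟩ := Set.nonempty_iff_ne_empty.2 hfol
  have hB0 : B 0 = 2 := by
    have := hBm ⟨0, h0⟩
    rw [hw0] at this
    simpa using this
  have hc := hBX 0 d hd1 hB0
  rw [zero_add] at hc
  have hBd : B ((d : ℕ) : ℤ) = w.get ⟨d, hd⟩ := hBm ⟨d, hd⟩
  rw [hBd] at hc
  exact hc

end Classification


section CountLC

lemma fin3_determined : ∀ a b : Fin 3, a ≠ 2 → b ≠ 2 →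
    (decide (a = 1) = decide (b = 1)) → a = b := by decide

lemma card_LC_X3 {m : ℕ} (hm : 2 ≤ m) :
    Nat.card (LC X3 m) ≤ 2 ^ ((Finset.range m).filter inS).card := by
  classical
  set Fm := (Finset.range m).filter inS with hFm
  have hidx : ∀ (w : LC X3 m) (d : Fm), (d : ℕ) < w.1.length := by
    rintro ⟨w, hw⟩ ⟨d, hd⟩
    rw [hw.1]
    rw [hFm, Finset.mem_filter, Finset.mem_range] at hd
    exact hd.1
  have hS : ∀ d : Fm, inS (d : ℕ) := by
    rintro ⟨d, hd⟩
    rw [hFm, Finset.mem_filter] at hd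
    exact hd.2
  set Φ : LC X3 m → (Fm → Bool) :=
    fun w d => decide (w.1.get ⟨(d : ℕ), hidx w d⟩ = 1) with hΦ
  have hinj : Function.Injective Φ := by
    intro w w' h
    have hs := lc_struct hm w.2 (by rw [w.2.1]; omega)
    have hs' := lc_struct hm w'.2 (by rw [w'.2.1]; omega)
    apply Subtype.ext
    apply List.ext_get (by rw [w.2.1, w'.2.1])
    intro i h1 h2
    rcases Nat.eq_zero_or_pos i with h0 | h0
    · subst h0
      rw [hs.1, hs'.1]
    · by_cases hiS : inS i
      · have him : i ∈ Fm := by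
          rw [hFm, Finset.mem_filter, Finset.mem_range]
          exact ⟨by rw [← w.2.1]; exact h1, hiS⟩
        have := congrFun h ⟨i, him⟩
        rw [hΦ] at this
        simp only at this
        exact fin3_determined _ _ ((hs.2 i h1 h0).1 hiS) ((hs'.2 i h2 h0).1 hiS) this
      · rw [(hs.2 i h1 h0).2 hiS, (hs'.2 i h2 h0).2 hiS]
  calc Nat.card (LC X3 m) ≤ Nat.card (Fm → Bool) :=
        Nat.card_le_card_of_injective Φ hinj
    _ = 2 ^ Fm.card := by
        rw [Nat.card_fun]
        simp [Nat.card_eq_fintype_card]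

end CountLC


section Windows

lemma shiftP_iterate {A : Type*} (r : ℕ) (y : ℕ → A) (k : ℕ) :
    (shiftP^[r] y) k = y (k + r) := by
  induction r generalizing y with
  | zero => rfl
  | succ r ih =>
    rw [Function.iterate_succ_apply, ih (shiftP y)]
    show y (k + r + 1) = y (k + (r + 1))
    congr 1

/-- The embedding of `Fin 2` into `Fin 3`. -/
def emb : Fin 2 → Fin 3 := Fin.castLE (by norm_num)

lemma emb_ne_two : ∀ b : Fin 2, emb b ≠ 2 := by decide

lemma emb_inj : Function.Injective emb := by decide

/-- The word `2 0 0 ... 0` of length `4^n`. -/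
def wn (n : ℕ) : List (Fin 3) := 2 :: List.replicate (4 ^ n - 1) 0

lemma wn_length (n : ℕ) : (wn n).length = 4 ^ n := by
  have h1 : 1 ≤ 4 ^ n := Nat.one_le_pow n 4 (by norm_num)
  rw [wn]
  simp only [List.length_cons, List.length_replicate]
  all_goals omega

/-- The `ℕ`-indexed word determined by `f`. -/
def Ff (n : ℕ) (f : Fin n → Fin 2) : ℕ → Fin 3 :=
  fun j => if h : j < n then emb (f ⟨j, h⟩) else 0

lemma Ff_ne_two (n : ℕ) (f : Fin n → Fin 2) (j : ℕ) : Ff n f j ≠ 2 := by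
  rw [Ff]
  split
  · exact emb_ne_two _
  · decide

/-- The two-sided point `2 0 … 0 f 0 0 …` with the block `f` in the window. -/
def gpt (n : ℕ) (f : Fin n → Fin 2) : ℤ → Fin 3 :=
  fun i => if i = 0 then 2 else if (4 ^ n : ℤ) ≤ i then Ff n f (i.toNat - 4 ^ n) else 0

lemma gpt_mem {n : ℕ} (hn : 1 ≤ n) (f : Fin n → Fin 2) : gpt n f ∈ X3 := by
  intro i d hd h2
  have hi : i = 0 := by
    by_contra hne
    by_cases hge : (4 ^ n : ℤ) ≤ i
    · have hv : gpt n f i = Ff n f (i.toNat - 4 ^ n) := by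
        simp only [gpt]
        rw [if_neg hne, if_pos hge]
      rw [hv] at h2
      exact Ff_ne_two _ _ _ h2
    · have hv : gpt n f i = 0 := by
        simp only [gpt]
        rw [if_neg hne, if_neg hge]
      rw [hv] at h2
      exact absurd h2 (by decide)
  subst hi
  rw [zero_add]
  have hd0 : ((d : ℕ) : ℤ) ≠ 0 := by omega
  by_cases hge : 4 ^ n ≤ d
  · have hcast : (4 ^ n : ℤ) ≤ (d : ℤ) := by exact_mod_cast hge
    have hval : gpt n f (d : ℤ) = Ff n f (d - 4 ^ n) := by
      simp only [gpt]
      rw [if_neg hd0, if_pos hcast]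
      congr 1
    rw [hval]
    constructor
    · intro _
      exact Ff_ne_two _ _ _
    · intro hnS
      have hout : ¬ (d - 4 ^ n < n) := by
        intro hlt
        apply hnS
        have heq : d = 4 ^ n + (d - 4 ^ n) := by omega
        rw [heq]
        exact inS_window hn hlt
      rw [Ff, dif_neg hout]
  · have hval : gpt n f (d : ℤ) = 0 := by
      simp only [gpt]
      have hcp : ¬ ((4 ^ n : ℤ) ≤ (d : ℤ)) := by exact_mod_cast hge
      rw [if_neg hd0, if_neg hcp]
    rw [hval]
    exact ⟨fun _ => by decide, fun _ => rfl⟩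

lemma gpt_matches_wn {n : ℕ} (f : Fin n → Fin 2) (i : Fin (wn n).length) :
    gpt n f ((i : ℕ) : ℤ) = (wn n).get i := by
  rcases i with ⟨iv, hiv⟩
  match iv, hiv with
  | 0, hiv =>
    show gpt n f ((0 : ℕ) : ℤ) = _
    have : gpt n f 0 = 2 := by simp [gpt]
    simpa [wn] using this
  | (j + 1), hiv =>
    have hlt : j + 1 < 4 ^ n := by rw [← wn_length n]; exact hiv
    have hv : gpt n f (((j + 1 : ℕ)) : ℤ) = 0 := by
      simp only [gpt]
      rw [if_neg (by omega), if_neg (by exact_mod_cast (by omega : ¬ (4 ^ n ≤ j + 1)))]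
    rw [hv]
    show (0 : Fin 3) = (2 :: List.replicate (4 ^ n - 1) 0).get ⟨j + 1, hiv⟩
    simp

lemma wn_mem_lang {n : ℕ} (hn : 1 ≤ n) : wn n ∈ Lang X3 (4 ^ n) := by
  refine ⟨wn_length n, gpt n (fun _ => 0), gpt_mem hn _, fun i => ?_⟩
  rw [zero_add]
  exact gpt_matches_wn _ i

/-- The ambient word with an extra `1` after the window. -/
def Gf (n : ℕ) (f : Fin n → Fin 2) : ℕ → Fin 3 :=
  fun k => if k < n then Ff n f k else if k = n then 1 else 0

lemma Gf_ne_two (n : ℕ) (f : Fin n → Fin 2) (k : ℕ) : Gf n f k ≠ 2 := by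
  rw [Gf]
  split
  · exact Ff_ne_two _ _ _
  · split <;> decide

/-- The two-sided point carrying `Gf` on the nonnegative axis. -/
def xg (n : ℕ) (f : Fin n → Fin 2) : ℤ → Fin 3 :=
  fun i => if 0 ≤ i then Gf n f i.toNat else 0

lemma xg_mem (n : ℕ) (f : Fin n → Fin 2) : xg n f ∈ X3 := by
  apply no2_mem
  intro i
  rw [xg]
  split
  · exact Gf_ne_two _ _ _
  · decide

lemma af_mem {n : ℕ} (hn : 1 ≤ n) (f : Fin n → Fin 2) :
    List.ofFn (fun i => emb (f i)) ∈ capSet X3 n (4 ^ n) (wn n) := by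
  have hlen : (List.ofFn (fun i => emb (f i))).length = n := List.length_ofFn
  have hget : ∀ (i : Fin (List.ofFn (fun i => emb (f i))).length) (h : (i : ℕ) < n),
      (List.ofFn (fun i => emb (f i))).get i = emb (f ⟨(i : ℕ), h⟩) := by
    intro i h
    rw [List.get_ofFn]
    exact congrArg _ (congrArg f (Fin.ext (by simp)))
  have hilt : ∀ i : Fin (List.ofFn (fun i => emb (f i))).length, (i : ℕ) < n := by
    intro i
    have := (Fin.cast hlen i).isLt
    simpa using this
  refine ⟨⟨hlen, xg n f, xg_mem n f, fun i => ?_⟩, ⟨?_, ?_⟩⟩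
  · -- occurs in xg at 0
    rw [zero_add, hget i (hilt i)]
    have hx : xg n f ((i : ℕ) : ℤ) = Gf n f (i : ℕ) := by
      simp only [xg]
      rw [if_pos (Int.natCast_nonneg _)]
      congr 1
    rw [hx]
    simp only [Gf]
    rw [if_pos (hilt i)]
    simp only [Ff]
    rw [dif_pos (hilt i)]
  · -- first intersection
    refine ⟨fun k : ℕ => gpt n f ((4 ^ n : ℤ) + k), ⟨⟨fun i => gpt n f (i + (4 ^ n : ℤ)),
      X3_translate (gpt_mem hn f) _, fun k => ?_⟩, fun i => ?_⟩,
      fun k : ℕ => gpt n f (k : ℤ), ⟨⟨gpt n f, gpt_mem hn f, fun k => rfl⟩,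
      fun i => gpt_matches_wn f i⟩, ?_⟩
    · show gpt n f _ = gpt n f _
      congr 1
      ring
    · -- cylinder of the ofFn word
      rw [hget i (hilt i)]
      have harg : ((4 ^ n : ℤ) + (i : ℕ)) ≠ 0 := by positivity
      have hge : (4 ^ n : ℤ) ≤ (4 ^ n : ℤ) + (i : ℕ) :=
        le_add_of_nonneg_right (Int.natCast_nonneg _)
      show gpt n f _ = _
      simp only [gpt]
      rw [if_neg harg, if_pos hge]
      obtain ⟨M, hM1, hM2⟩ : ∃ M : ℕ, ((4 : ℤ) ^ n = (M : ℤ)) ∧ (4 ^ n = M) :=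
        ⟨4 ^ n, by push_cast; ring, rfl⟩
      have htn : ((4 ^ n : ℤ) + (i : ℕ)).toNat - 4 ^ n = (i : ℕ) := by
        rw [hM1, hM2]
        omega
      rw [htn]
      simp only [Ff]
      rw [dif_pos (hilt i)]
    · -- the iterate equality
      funext k
      rw [shiftP_iterate]
      show gpt n f (((k + 4 ^ n : ℕ)) : ℤ) = gpt n f ((4 ^ n : ℤ) + k)
      congr 1
      push_cast
      ring
  · -- second intersection
    refine ⟨fun k : ℕ => Gf n f k, ⟨⟨⟨xg n f, xg_mem n f, fun k => ?_⟩, fun i => ?_⟩,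
      ⟨xg n f, xg_mem n f, fun k => ?_⟩, ?_⟩⟩
    · show Gf n f k = xg n f (k : ℤ)
      simp only [xg]
      rw [if_pos (Int.natCast_nonneg _)]
      congr 1
    · rw [hget i (hilt i)]
      show Gf n f _ = _
      simp only [Gf]
      rw [if_pos (hilt i)]
      simp only [Ff]
      rw [dif_pos (hilt i)]
    · show Gf n f k = xg n f (k : ℤ)
      simp only [xg]
      rw [if_pos (Int.natCast_nonneg _)]
      congr 1
    · -- not in the shifted cylinder
      rintro ⟨z', ⟨⟨x', hx', hzx⟩, hz0⟩, hiter⟩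
      have hpow : 0 < 4 ^ n := Nat.pow_pos (by norm_num)
      have hpos0 : 0 < (wn n).length := by rw [wn_length]; exact hpow
      have hz'0 : z' 0 = 2 := by
        have := hz0 ⟨0, hpos0⟩
        simpa [wn] using this
      have hx'0 : x' 0 = 2 := by
        have := hzx 0
        rw [hz'0] at this
        exact_mod_cast this.symm
      have hd1 : 1 ≤ 4 ^ n + n := by omega
      have hc := (hx' 0 (4 ^ n + n) hd1 hx'0).2 (not_inS_end hn)
      rw [zero_add] at hc
      have hval : x' ((4 ^ n + n : ℕ) : ℤ) = 1 := by
        have h1 : z' (4 ^ n + n) = x' ((4 ^ n + n : ℕ) : ℤ) := hzx _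
        have h2 : z' (n + 4 ^ n) = Gf n f n := by
          have := congrFun hiter n
          rw [shiftP_iterate] at this
          exact this
        have h3 : Gf n f n = 1 := by
          simp [Gf]
        rw [← h1]
        have harg : 4 ^ n + n = n + 4 ^ n := by omega
        rw [harg, h2, h3]
      rw [hval] at hc
      exact absurd hc (by decide)

lemma capSet_lb {n : ℕ} (hn : 1 ≤ n) :
    2 ^ n ≤ Nat.card (capSet X3 n (4 ^ n) (wn n)) := by
  haveI : Finite (capSet X3 n (4 ^ n) (wn n)) :=
    ((lang_finite X3 n).subset capSet_subset_lang).to_subtype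
  set ψ : (Fin n → Fin 2) → capSet X3 n (4 ^ n) (wn n) :=
    fun f => ⟨List.ofFn (fun i => emb (f i)), af_mem hn f⟩ with hψ
  have hinj : Function.Injective ψ := by
    intro f f' h
    rw [hψ] at h
    simp only [Subtype.mk.injEq] at h
    have := List.ofFn_injective h
    funext i
    exact emb_inj (congrFun this i)
  calc (2 : ℕ) ^ n = Nat.card (Fin n → Fin 2) := by
        rw [Nat.card_fun]
        simp [Nat.card_eq_fintype_card]
    _ ≤ _ := Nat.card_le_card_of_injective ψ hinj

end Windows


section Final

lemma subshift_X3 : (letI : TopologicalSpace (Fin 3) := ⊥; IsSubshift X3) := by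
  letI : TopologicalSpace (Fin 3) := ⊥
  haveI : DiscreteTopology (Fin 3) := ⟨rfl⟩
  refine ⟨?_, shift_X3⟩
  have hX : X3 = ⋂ (i : ℤ), ⋂ (d : ℕ), ⋂ (_ : 1 ≤ d),
      ((fun x : ℤ → Fin 3 => (x i, x (i + d))) ⁻¹'
        {p : Fin 3 × Fin 3 | p.1 = 2 → ((inS d → p.2 ≠ 2) ∧ (¬ inS d → p.2 = 0))}) := by
    ext x
    simp only [X3, Set.mem_setOf_eq, Set.mem_iInter, Set.mem_preimage]
  rw [hX]
  refine isClosed_iInter fun i => isClosed_iInter fun d => isClosed_iInter fun _ => ?_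
  exact IsClosed.preimage ((continuous_apply i).prodMk (continuous_apply (i + d)))
    (isClosed_discrete _)

lemma cap_X3_ge : Real.log 2 ≤ cap X3 := by
  rw [cap_eq]
  have hb : ∀ n : ℕ, Real.log (sSup (capNums X3 n)) / (n : ℝ) ≤ Real.log 3 := by
    intro n
    rcases Nat.eq_zero_or_pos n with h0 | h0
    · subst h0
      simp
      exact Real.log_nonneg (by norm_num)
    · rw [div_le_iff₀ (by exact_mod_cast h0)]
      calc Real.log (sSup (capNums X3 n)) ≤ (n : ℝ) * Real.log (Fintype.card (Fin 3)) :=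
            log_sSup_capNums_le X3 n
        _ = Real.log 3 * (n : ℝ) := by
            rw [Fintype.card_fin]
            push_cast
            ring
  apply le_limsup_of_frequently_le
  · apply Filter.Eventually.frequently
    rw [Filter.eventually_atTop]
    refine ⟨1, fun n hn => ?_⟩
    have hmem : ((Nat.card (capSet X3 n (4 ^ n) (wn n)) : ℝ)) ∈ capNums X3 n :=
      ⟨4 ^ n, Nat.one_le_pow _ _ (by norm_num), wn n, wn_mem_lang hn, rfl⟩
    have hle : ((2 : ℝ)) ^ n ≤ sSup (capNums X3 n) := by
      refine le_trans ?_ (le_csSup (capNums_bddAbove X3 n) hmem)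
      exact_mod_cast capSet_lb hn
    have hlog : (n : ℝ) * Real.log 2 ≤ Real.log (sSup (capNums X3 n)) := by
      rw [← Real.log_pow]
      exact Real.log_le_log (by positivity) hle
    rw [le_div_iff₀ (by exact_mod_cast hn : (0 : ℝ) < (n : ℝ))]
    linarith [hlog]
  · exact Filter.isBoundedUnder_of ⟨Real.log 3, hb⟩

lemma hC_X3_le : hC X3 ≤ Real.log 2 / 2 := by
  have h0 : ∀ n : ℕ, 0 ≤ max 0 (Real.log (Nat.card (LC X3 n))) / (n : ℝ) :=
    fun n => div_nonneg (le_max_left _ _) (Nat.cast_nonneg _)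
  apply limsup_le_of_le (Filter.isCoboundedUnder_le_of_le atTop h0)
  rw [Filter.eventually_atTop]
  refine ⟨256, fun m hm => ?_⟩
  have hm2 : 2 ≤ m := by omega
  have hcard := card_LC_X3 hm2
  have hfilter := filter_inS_card hm
  set Dm := ((Finset.range m).filter inS).card with hDm
  have hD0 : (0 : ℝ) ≤ (Dm : ℝ) * Real.log 2 :=
    mul_nonneg (Nat.cast_nonneg _) (Real.log_nonneg one_le_two)
  have hlogle : max 0 (Real.log (Nat.card (LC X3 m))) ≤ (Dm : ℝ) * Real.log 2 := by
    apply max_le hD0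
    rcases Nat.eq_zero_or_pos (Nat.card (LC X3 m)) with hz | hp
    · rw [hz]
      simpa using hD0
    · calc Real.log (Nat.card (LC X3 m)) ≤ Real.log ((2 : ℝ) ^ Dm) := by
            apply Real.log_le_log (by exact_mod_cast hp)
            exact_mod_cast hcard
        _ = (Dm : ℝ) * Real.log 2 := Real.log_pow _ _
  have hmR : (0 : ℝ) < (m : ℝ) := by exact_mod_cast (by omega : 0 < m)
  calc max 0 (Real.log (Nat.card (LC X3 m))) / (m : ℝ)
      ≤ ((Dm : ℝ) * Real.log 2) / (m : ℝ) := (div_le_div_iff_of_pos_right hmR).2 hlogle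
    _ ≤ Real.log 2 / 2 := by
        rw [div_le_div_iff₀ hmR (by norm_num)]
        have h2D : (2 : ℝ) * (Dm : ℝ) ≤ (m : ℝ) := by exact_mod_cast hfilter
        nlinarith [Real.log_nonneg (by norm_num : (1 : ℝ) ≤ 2)]

lemma hC_lt_cap_X3 : hC X3 < cap X3 := by
  have h2 : (0 : ℝ) < Real.log 2 := Real.log_pos (by norm_num)
  calc hC X3 ≤ Real.log 2 / 2 := hC_X3_le
    _ < Real.log 2 := by linarith
    _ ≤ cap X3 := cap_X3_ge

end Final


/-- For every subshift, `cap(X) ≥ h_𝒞(X)`, and this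
inequality can be strict. -/
theorem cap_ge_hC :
    (∀ (A : Type) [Fintype A] [TopologicalSpace A] [DiscreteTopology A]
        (X : Set (ℤ → A)), IsSubshift X → hC X ≤ cap X) ∧
    (∃ (A : Type) (_ : Fintype A) (X : Set (ℤ → A)),
        (letI : TopologicalSpace A := ⊥
         IsSubshift X) ∧ hC X < cap X) := by
  constructor
  · intro A _ _ _ X hX
    exact hC_le_cap X hX.2
  · exact ⟨Fin 3, inferInstance, X3, subshift_X3, hC_lt_cap_X3⟩

end QFTPaper
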